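/- Let {P_α : α < κ} be a family of directed sets, each with a minimum element, such that for each α there is a directed set Q_α carrying a topology which is cosmic (has a countable network of closed sets) and CSBS, and a family {P_{α,q} : q ∈ Q_α} of subsets of P_α covering P_α, with P_{α,q} ⊆ P_{α,q'} whenever q ≤ q' in Q_α, and with each P_{α,q} countably directed in itself (every countable subset of P_{α,q} has an upper bound in P_{α,q}). Then the Σ-product ∑_α P_α has calibre (ω₁,ω). -/
import Mathlib


open Cardinal Set

/-- A directed set has calibre `(ω₁,ω)` if every uncountable subset contains an
infinite subset which is bounded (has an upper bound). -/
def CalibreO1O (P : Type*) [Preorder P] : Prop :=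
  ∀ S : Set P, ¬ S.Countable → ∃ T ⊆ S, T.Infinite ∧ BddAbove T

/-- A family `𝒞` is a network for `X` if whenever `x ∈ U` with `U` open, there
is `C ∈ 𝒞` with `x ∈ C ⊆ U`. -/
def IsNetwork {X : Type*} [TopologicalSpace X] (𝒞 : Set (Set X)) : Prop :=
  ∀ x : X, ∀ U : Set X, IsOpen U → x ∈ U → ∃ C ∈ 𝒞, x ∈ C ∧ C ⊆ U

/-- A space is cosmic if it has a countable network of closed sets. -/
def Cosmic (X : Type*) [TopologicalSpace X] : Prop :=
  ∃ 𝒞 : Set (Set X), 𝒞.Countable ∧ (∀ C ∈ 𝒞, IsClosed C) ∧ IsNetwork 𝒞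

/-- A topological directed set is CSBS if every convergent sequence has a
subsequence which is bounded in the directed set. -/
def CSBS (P : Type*) [Preorder P] [TopologicalSpace P] : Prop :=
  ∀ (x : ℕ → P) (p : P), Filter.Tendsto x Filter.atTop (nhds p) →
    ∃ φ : ℕ → ℕ, StrictMono φ ∧ BddAbove (Set.range (x ∘ φ))

/-- if each directed set `P_α` (with minimum) is covered by a
`Q_α`-ordered family of countably directed (in themselves) subsets, where each
`Q_α` is a cosmic CSBS topological directed set, then the Σ-product `∑_α P_α`
has calibre `(ω₁,ω)`. -/
private lemma countable_finsets {α : Type*} {s : Set α} (hs : s.Countable) :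
    {F : Finset α | ↑F ⊆ s}.Countable := by
  have h := Set.countable_setOf_finite_subset hs
  have : {F : Finset α | ↑F ⊆ s} = (fun F : Finset α => (F : Set α)) ⁻¹' {t | t.Finite ∧ t ⊆ s} := by
    ext F; simp [Finset.finite_toSet]
  rw [this]
  exact h.preimage Finset.coe_injective

private lemma exists_injective_seq {α : Type*} (A : ℕ → Set α) (hA : ∀ k, (A k).Infinite) :
    ∃ p : ℕ → α, (∀ k, p k ∈ A k) ∧ Function.Injective p := by
  classical
  have key : ∀ (k : ℕ) (G : Finset α), ∃ x, x ∈ A k ∧ x ∉ G := by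
    intro k G
    obtain ⟨x, hx⟩ := ((hA k).diff G.finite_toSet).nonempty
    exact ⟨x, hx.1, hx.2⟩
  choose f hf1 hf2 using key
  let G : ℕ → Finset α := fun k => Nat.rec ∅ (fun m Gm => insert (f m Gm) Gm) k
  have hGsucc : ∀ k, G (k + 1) = insert (f k (G k)) (G k) := fun k => rfl
  let p : ℕ → α := fun k => f k (G k)
  have hmem : ∀ k j, j < k → p j ∈ G k := by
    intro k
    induction k with
    | zero => omega
    | succ k ih =>
      intro j hj
      rw [hGsucc]
      rcases Nat.lt_succ_iff_lt_or_eq.mp hj with h | h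
      · exact Finset.mem_insert_of_mem (ih j h)
      · subst h; exact Finset.mem_insert_self _ _
  refine ⟨p, fun k => hf1 k (G k), ?_⟩
  intro j k hjk
  by_contra hne
  rcases Nat.lt_or_ge j k with h | h
  · have := hmem k j h
    rw [show p j = p k from hjk] at this
    exact hf2 k (G k) this
  · have h' : k < j := lt_of_le_of_ne h (Ne.symm hne)
    have := hmem j k h'
    rw [show p k = p j from hjk.symm] at this
    exact hf2 j (G j) this

theorem sigma_product_type_cosmic_CSBS_countably_directed
    {ι : Type*} (P : ι → Type*)
    [∀ i, PartialOrder (P i)] [∀ i, OrderBot (P i)]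
    (hPdir : ∀ i, ∀ F : Set (P i), F.Finite → BddAbove F)
    (Q : ι → Type*) [∀ i, PartialOrder (Q i)] [∀ i, TopologicalSpace (Q i)]
    (hQdir : ∀ i, ∀ F : Set (Q i), F.Finite → BddAbove F)
    (hQcos : ∀ i, Cosmic (Q i)) (hQcsbs : ∀ i, CSBS (Q i))
    (Pq : ∀ i, Q i → Set (P i))
    (hcover : ∀ i, (⋃ q, Pq i q) = Set.univ)
    (hmono : ∀ i, ∀ q q' : Q i, q ≤ q' → Pq i q ⊆ Pq i q')
    (hcd : ∀ i, ∀ q : Q i, ∀ S ⊆ Pq i q, S.Countable →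
      ∃ b ∈ Pq i q, ∀ s ∈ S, s ≤ b) :
    CalibreO1O {p : ∀ i, P i // {i | p i ≠ ⊥}.Countable} := by
  classical
  intro S hS
  -- choice of covering index for each point
  have hQof' : ∀ i (x : P i), ∃ q : Q i, x ∈ Pq i q := by
    intro i x
    have hx : x ∈ ⋃ q, Pq i q := by rw [hcover]; trivial
    exact Set.mem_iUnion.mp hx
  choose Qof hQof using hQof'
  -- networks
  have h𝒞' := hQcos
  choose 𝒞 h𝒞 using h𝒞'
  have h𝒞c : ∀ i, (𝒞 i).Countable := fun i => (h𝒞 i).1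
  have h𝒞net : ∀ i, IsNetwork (𝒞 i) := fun i => (h𝒞 i).2.2
  -- constraints
  let Con : Set ι → Set ((i : ι) × Set (Q i)) :=
    fun Dc => {x | x.1 ∈ Dc ∧ x.2 ∈ 𝒞 x.1}
  have hConCt : ∀ Dc : Set ι, Dc.Countable → (Con Dc).Countable := by
    intro Dc hDc
    have : Con Dc = ⋃ i ∈ Dc, Sigma.mk i '' 𝒞 i := by
      ext ⟨i, C⟩
      simp only [Set.mem_setOf_eq, Set.mem_iUnion, Set.mem_image, Con]
      constructor
      · rintro ⟨h1, h2⟩; exact ⟨i, h1, C, h2, rfl⟩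
      · rintro ⟨i', h1, C', h2, h3⟩
        obtain ⟨rfl, h4⟩ := Sigma.mk.inj_iff.mp h3
        obtain rfl := eq_of_heq h4
        exact ⟨h1, h2⟩
    rw [this]
    exact hDc.biUnion fun i _ => (h𝒞c i).image _
  -- fibers
  let fiber : Finset ((i : ι) × Set (Q i)) → Set {p : ∀ i, P i // {i | p i ≠ ⊥}.Countable} :=
    fun F => {p | p ∈ S ∧ ∀ x ∈ F, Qof x.1 (p.1 x.1) ∈ x.2}
  -- countable (or infinite) selections from fibers
  have hpick' : ∀ F : Finset ((i : ι) × Set (Q i)),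
      ∃ A, A ⊆ fiber F ∧ A.Countable ∧ (¬(fiber F).Countable → A.Infinite) := by
    intro F
    by_cases h : (fiber F).Countable
    · exact ⟨∅, empty_subset _, countable_empty, fun h' => absurd h h'⟩
    · have hinf : (fiber F).Infinite := fun hfin => h hfin.countable
      refine ⟨Set.range (fun n => ((Set.Infinite.natEmbedding _ hinf n : ↥(fiber F)) : _)), ?_, Set.countable_range _, ?_⟩
      · rintro _ ⟨n, rfl⟩; exact (Set.Infinite.natEmbedding _ hinf n).2
      · intro _
        exact Set.infinite_range_of_injective (Subtype.val_injective.comp (Set.Infinite.natEmbedding _ hinf).injective)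
  choose pickset hpick1 hpick2 hpick3 using hpick'
  -- the recursion of countable coordinate sets
  let NewE : Set ι → Set {p : ∀ i, P i // {i | p i ≠ ⊥}.Countable} :=
    fun Dc => ⋃ F ∈ {F : Finset ((i : ι) × Set (Q i)) | ↑F ⊆ Con Dc}, pickset F
  have hNewECt : ∀ Dc : Set ι, Dc.Countable → (NewE Dc).Countable := by
    intro Dc hDc
    exact Set.Countable.biUnion (countable_finsets (hConCt Dc hDc)) (fun F _ => hpick2 F)
  let Dn : ℕ → Set ι := fun n =>
    Nat.rec ∅ (fun _ Dp => Dp ∪ ⋃ p ∈ NewE Dp, {i | p.1 i ≠ ⊥}) n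
  have hDnsucc : ∀ n, Dn (n + 1) = Dn n ∪ ⋃ p ∈ NewE (Dn n), {i | p.1 i ≠ ⊥} := fun n => rfl
  have hDnCt : ∀ n, (Dn n).Countable := by
    intro n
    induction n with
    | zero => exact countable_empty
    | succ n ih =>
      rw [hDnsucc]
      exact ih.union (Set.Countable.biUnion (hNewECt _ ih) (fun p _ => p.2))
  have hDnmono : Monotone Dn := by
    apply monotone_nat_of_le_succ
    intro n
    rw [hDnsucc]
    exact subset_union_left
  let D : Set ι := ⋃ n, Dn n
  have hDCt : D.Countable := Set.countable_iUnion hDnCt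
  have hDnD : ∀ n, Dn n ⊆ D := fun n => Set.subset_iUnion Dn n
  -- support control
  have hsupp : ∀ n p, p ∈ NewE (Dn n) → {i | p.1 i ≠ ⊥} ⊆ D := by
    intro n p hp
    intro i hi
    apply hDnD (n + 1)
    rw [hDnsucc]
    exact Set.mem_union_right _ (Set.mem_biUnion hp hi)
  -- the empty fiber is all of S
  have hfib_empty : fiber ∅ = S := by
    ext p
    simp [fiber]
  -- a heavy point exists
  have hheavy : ∃ β ∈ S, ∀ (n : ℕ) (F : Finset ((i : ι) × Set (Q i))),
      ↑F ⊆ Con (Dn n) → (∀ x ∈ F, Qof x.1 (β.1 x.1) ∈ x.2) → ¬(fiber F).Countable := by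
    by_contra hcon
    push_neg at hcon
    apply hS
    have hsub : S ⊆ ⋃ nF ∈ {nF : ℕ × Finset ((i : ι) × Set (Q i)) |
        ↑nF.2 ⊆ Con (Dn nF.1) ∧ (fiber nF.2).Countable}, fiber nF.2 := by
      intro β hβ
      obtain ⟨n, F, h1, h2, h3⟩ := hcon β hβ
      have hm : ((n, F) : ℕ × Finset ((i : ι) × Set (Q i))) ∈ {nF : ℕ × Finset ((i : ι) × Set (Q i)) |
          ↑nF.2 ⊆ Con (Dn nF.1) ∧ (fiber nF.2).Countable} := ⟨h1, h3⟩
      exact Set.mem_biUnion hm ⟨hβ, h2⟩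
    refine Set.Countable.mono hsub (Set.Countable.biUnion ?_ (fun nF hnF => hnF.2))
    have : {nF : ℕ × Finset ((i : ι) × Set (Q i)) |
        ↑nF.2 ⊆ Con (Dn nF.1) ∧ (fiber nF.2).Countable} ⊆
        ⋃ n : ℕ, (fun F => ((n, F) : ℕ × Finset _)) '' {F | ↑F ⊆ Con (Dn n)} := by
      rintro ⟨n, F⟩ ⟨h1, _⟩
      exact Set.mem_iUnion.mpr ⟨n, ⟨F, h1, rfl⟩⟩
    refine Set.Countable.mono this (Set.countable_iUnion (fun n => ?_))
    exact (countable_finsets (hConCt _ (hDnCt n))).image _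
  obtain ⟨β, hβS, hβ⟩ := hheavy
  -- D is nonempty
  have hDne : D.Nonempty := by
    by_contra hD
    rw [Set.not_nonempty_iff_eq_empty] at hD
    have hE : (pickset ∅).Infinite := by
      apply hpick3
      rw [hfib_empty]
      exact hS
    have hmem0 : pickset ∅ ⊆ NewE (Dn 0) := by
      intro p hp
      exact Set.mem_biUnion (show (∅ : Finset ((i : ι) × Set (Q i))) ∈ _ by simp) hp
    have : (pickset ∅).Subsingleton := by
      intro p hp q hq
      have hps := (hsupp 0 p (hmem0 hp))
      have hqs := (hsupp 0 q (hmem0 hq))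
      rw [hD] at hps hqs
      apply Subtype.ext
      funext i
      have h1 : p.1 i = ⊥ := by by_contra h; exact (hps h).elim
      have h2 : q.1 i = ⊥ := by by_contra h; exact (hqs h).elim
      rw [h1, h2]
    exact hE this.finite
  -- constraints at β
  let L : Set ((i : ι) × Set (Q i)) :=
    {x | x.1 ∈ D ∧ x.2 ∈ 𝒞 x.1 ∧ Qof x.1 (β.1 x.1) ∈ x.2}
  have hLCt : L.Countable := by
    refine (hConCt D hDCt).mono ?_
    rintro x ⟨h1, h2, _⟩
    exact ⟨h1, h2⟩
  have hLne : L.Nonempty := by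
    obtain ⟨i, hi⟩ := hDne
    obtain ⟨C, hC1, hC2, _⟩ := h𝒞net i (Qof i (β.1 i)) Set.univ isOpen_univ (Set.mem_univ _)
    exact ⟨⟨i, C⟩, hi, hC1, hC2⟩
  obtain ⟨c, hLc⟩ := hLCt.exists_eq_range hLne
  have hc : ∀ j, c j ∈ L := fun j => hLc ▸ Set.mem_range_self j
  -- the finite constraint sets and their levels
  let Fk : ℕ → Finset ((i : ι) × Set (Q i)) := fun k => (Finset.range (k + 1)).image c
  have hlev' : ∀ j : ℕ, ∃ n, (c j).1 ∈ Dn n := fun j => Set.mem_iUnion.mp (hc j).1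
  choose lev hlev using hlev'
  let nk : ℕ → ℕ := fun k => (Finset.range (k + 1)).sup lev
  have hFkCon : ∀ k, ↑(Fk k) ⊆ Con (Dn (nk k)) := by
    intro k x hx
    simp only [Fk, Finset.coe_image, Set.mem_image, Finset.mem_coe, Finset.mem_range] at hx
    obtain ⟨j, hj, rfl⟩ := hx
    refine ⟨hDnmono (Finset.le_sup (Finset.mem_range.mpr hj)) (hlev j), (hc j).2.1⟩
  have hFkfib : ∀ k, ¬(fiber (Fk k)).Countable := by
    intro k
    apply hβ (nk k) (Fk k) (hFkCon k)
    intro x hx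
    simp only [Fk, Finset.mem_image, Finset.mem_range] at hx
    obtain ⟨j, _, rfl⟩ := hx
    exact (hc j).2.2
  -- choose the injective sequence
  obtain ⟨p, hpA, hpinj⟩ := exists_injective_seq (fun k => pickset (Fk k))
    (fun k => hpick3 _ (hFkfib k))
  have hpS : ∀ k, p k ∈ S := fun k => (hpick1 _ (hpA k)).1
  have hpfib : ∀ k, ∀ x ∈ Fk k, Qof x.1 ((p k).1 x.1) ∈ x.2 :=
    fun k => (hpick1 _ (hpA k)).2
  have hpsupp : ∀ k, {i | (p k).1 i ≠ ⊥} ⊆ D := by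
    intro k
    apply hsupp (nk k)
    exact Set.mem_biUnion (hFkCon k) (hpA k)
  -- convergence at every coordinate of D
  have hconv : ∀ i ∈ D, Filter.Tendsto (fun k => Qof i ((p k).1 i))
      Filter.atTop (nhds (Qof i (β.1 i))) := by
    intro i hi
    rw [tendsto_atTop_nhds]
    intro U hU hUopen
    obtain ⟨C, hC1, hC2, hC3⟩ := h𝒞net i (Qof i (β.1 i)) U hUopen hU
    have : (⟨i, C⟩ : (i : ι) × Set (Q i)) ∈ L := ⟨hi, hC1, hC2⟩
    rw [hLc] at this
    obtain ⟨j, hj⟩ := this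
    refine ⟨j, fun k hk => ?_⟩
    have hmem : c j ∈ Fk k := Finset.mem_image_of_mem c (Finset.mem_range.mpr (by omega))
    have hcj := hpfib k (c j) hmem
    rw [hj] at hcj
    exact hC3 hcj
  -- enumerate D
  obtain ⟨e, he⟩ := hDCt.exists_eq_range hDne
  -- CSBS diagonalisation
  have key : ∀ (n : ℕ) (f : {f : ℕ → ℕ // StrictMono f}), ∃ g : ℕ → ℕ, StrictMono g ∧
      BddAbove (Set.range (fun k => Qof (e n) ((p (f.1 (g k))).1 (e n)))) := by
    intro n f
    have hi : e n ∈ D := he ▸ Set.mem_range_self n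
    have ht : Filter.Tendsto (fun k => Qof (e n) ((p (f.1 k)).1 (e n)))
        Filter.atTop (nhds (Qof (e n) (β.1 (e n)))) :=
      (hconv (e n) hi).comp (f.2.tendsto_atTop)
    obtain ⟨φ, hφ, hb⟩ := hQcsbs (e n) _ _ ht
    exact ⟨φ, hφ, hb⟩
  choose φf hφm hφb using key
  let Sg : ℕ → {f : ℕ → ℕ // StrictMono f} := fun n =>
    Nat.rec ⟨id, strictMono_id⟩ (fun m fm => ⟨fm.1 ∘ φf m fm, fm.2.comp (hφm m fm)⟩) n
  have hSgucc : ∀ n, (Sg (n + 1)).1 = (Sg n).1 ∘ φf n (Sg n) := fun n => rfl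
  let d : ℕ → ℕ := fun k => (Sg k).1 k
  have hd : StrictMono d := by
    apply strictMono_nat_of_lt_succ
    intro k
    have h1 : k + 1 ≤ φf k (Sg k) (k + 1) := (hφm k (Sg k)).le_apply
    calc d k = (Sg k).1 k := rfl
    _ < (Sg k).1 (k + 1) := (Sg k).2 (Nat.lt_succ_self k)
    _ ≤ (Sg k).1 (φf k (Sg k) (k + 1)) := (Sg k).2.monotone h1
    _ = d (k + 1) := rfl
  have hfact : ∀ n t x, ∃ m, (Sg (n + t)).1 x = (Sg n).1 m := by
    intro n t
    induction t with
    | zero => exact fun x => ⟨x, rfl⟩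
    | succ t ih =>
      intro x
      have : (Sg (n + t + 1)).1 x = (Sg (n + t)).1 (φf (n + t) (Sg (n + t)) x) := rfl
      rw [show n + (t + 1) = n + t + 1 from rfl, this]
      exact ih _
  have hdfact : ∀ n k, n ≤ k → ∃ m, d k = (Sg n).1 m := by
    intro n k hnk
    obtain ⟨t, rfl⟩ := Nat.exists_eq_add_of_le hnk
    exact hfact n t _
  -- bounds in Q for each coordinate of D
  have hbdQ : ∀ i, i ∈ D → ∃ b : Q i, ∀ k, Qof i ((p (d k)).1 i) ≤ b := by
    intro i hi
    rw [he] at hi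
    obtain ⟨n, rfl⟩ := hi
    have htail : BddAbove (Set.range (fun m => Qof (e n) ((p ((Sg (n + 1)).1 m)).1 (e n)))) :=
      hφb n (Sg n)
    obtain ⟨b1, hb1⟩ := htail
    obtain ⟨b2, hb2⟩ := hQdir (e n) ((fun k => Qof (e n) ((p (d k)).1 (e n))) '' Set.Iic n)
      ((Set.finite_Iic n).image _)
    obtain ⟨b, hb⟩ := hQdir (e n) {b1, b2} ((Set.finite_singleton b2).insert b1)
    refine ⟨b, fun k => ?_⟩
    rcases le_or_gt k n with h | h
    · exact le_trans (hb2 (Set.mem_image_of_mem _ h))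
        (hb (Set.mem_insert_of_mem _ (Set.mem_singleton b2)))
    · obtain ⟨m, hm⟩ := hdfact (n + 1) k h
      rw [hm]
      exact le_trans (hb1 (Set.mem_range_self m)) (hb (Set.mem_insert b1 {b2}))
  choose BdQ hBdQ using hbdQ
  -- zero off D
  have hzero : ∀ k i, i ∉ D → (p k).1 i = ⊥ := by
    intro k i hi
    by_contra h
    exact hi (hpsupp k h)
  -- bounds in P for each coordinate
  have hbdP : ∀ i, ∃ b : P i, ∀ k, (p (d k)).1 i ≤ b := by
    intro i
    by_cases hi : i ∈ D
    · have hsub : Set.range (fun k => (p (d k)).1 i) ⊆ Pq i (BdQ i hi) := by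
        rintro _ ⟨k, rfl⟩
        exact hmono i _ _ (hBdQ i hi k) (hQof i ((p (d k)).1 i))
      obtain ⟨b, _, hb⟩ := hcd i (BdQ i hi) _ hsub (Set.countable_range _)
      exact ⟨b, fun k => hb _ (Set.mem_range_self k)⟩
    · refine ⟨⊥, fun k => ?_⟩
      rw [hzero (d k) i hi]
  choose bP hbP using hbdP
  -- the upper bound
  have hrsupp : {i | (if i ∈ D then bP i else ⊥ : P i) ≠ ⊥}.Countable := by
    refine hDCt.mono ?_
    intro i hi
    by_contra h
    simp only [Set.mem_setOf_eq, if_neg h] at hi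
    exact hi rfl
  refine ⟨Set.range (fun k => p (d k)), ?_, ?_, ?_⟩
  · rintro _ ⟨k, rfl⟩
    exact hpS (d k)
  · exact Set.infinite_range_of_injective (hpinj.comp hd.injective)
  · refine ⟨⟨fun i => if i ∈ D then bP i else ⊥, hrsupp⟩, ?_⟩
    rintro _ ⟨k, rfl⟩
    rw [← Subtype.coe_le_coe]
    intro i
    by_cases hi : i ∈ D
    · simpa only [if_pos hi] using hbP i k
    · simp only [if_neg hi, hzero (d k) i hi]
      exact le_refl _
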